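/- For all positive integers m and n, every coefficient of the power series expansion in q of a(m,n) := (−1)^{m−1} q^{2mn+m−1} / ((1+q^n)(1−q^{2m−1})) is equal to −1, 0, or 1. -/

import Mathlib

open PowerSeries

namespace CoeffsPmOneAux

open Finset

lemma inv_one_add_pow (n : ℕ) (hn : 0 < n) :
    ((1 + (X : PowerSeries ℂ) ^ n))⁻¹
      = PowerSeries.mk fun k => if n ∣ k then (-1 : ℂ) ^ (k / n) else 0 := by
  have hc : constantCoeff (R := ℂ) (1 + (X : PowerSeries ℂ) ^ n) ≠ 0 := by
    simp [zero_pow hn.ne']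
  rw [PowerSeries.inv_eq_iff_mul_eq_one hc]
  ext K
  rw [mul_add, mul_one, map_add, PowerSeries.coeff_mul_X_pow', PowerSeries.coeff_mk,
    PowerSeries.coeff_mk, PowerSeries.coeff_one]
  by_cases hK : n ≤ K
  · have hK0 : K ≠ 0 := by omega
    rw [if_pos hK, if_neg hK0]
    by_cases hdvd : n ∣ K
    · obtain ⟨c, rfl⟩ := hdvd
      have hc1 : 1 ≤ c := by
        by_contra hc1
        have : c = 0 := by omega
        subst this; simp at hK; omega
      obtain ⟨c', rfl⟩ : ∃ c', c = c' + 1 := ⟨c - 1, by omega⟩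
      have h1 : n * (c' + 1) - n = n * c' := by
        rw [Nat.mul_succ, Nat.add_sub_cancel]
      rw [h1, if_pos (Dvd.intro _ rfl), if_pos (Dvd.intro _ rfl),
        Nat.mul_div_cancel_left _ hn, Nat.mul_div_cancel_left _ hn, pow_succ]
      ring
    · have hdvd' : ¬ n ∣ K - n := by
        intro h
        exact hdvd (by have := Nat.sub_add_cancel hK; rw [← this]; exact Nat.dvd_add h dvd_rfl)
      rw [if_neg hdvd, if_neg hdvd', add_zero]
  · rw [if_neg hK, add_zero]
    by_cases hK0 : K = 0
    · subst hK0; simp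
    · have : ¬ n ∣ K := fun h => hK (Nat.le_of_dvd (Nat.pos_of_ne_zero hK0) h)
      rw [if_neg this, if_neg hK0]

lemma inv_one_sub_pow (d : ℕ) (hd : 0 < d) :
    ((1 - (X : PowerSeries ℂ) ^ d))⁻¹
      = PowerSeries.mk fun k => if d ∣ k then (1 : ℂ) else 0 := by
  have hc : constantCoeff (R := ℂ) (1 - (X : PowerSeries ℂ) ^ d) ≠ 0 := by
    simp [zero_pow hd.ne']
  rw [PowerSeries.inv_eq_iff_mul_eq_one hc]
  ext K
  rw [mul_sub, mul_one, map_sub, PowerSeries.coeff_mul_X_pow', PowerSeries.coeff_mk,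
    PowerSeries.coeff_mk, PowerSeries.coeff_one]
  by_cases hK : d ≤ K
  · have hK0 : K ≠ 0 := by omega
    rw [if_pos hK, if_neg hK0]
    by_cases hdvd : d ∣ K
    · have hdvd' : d ∣ K - d := Nat.dvd_sub hdvd dvd_rfl
      rw [if_pos hdvd, if_pos hdvd', sub_self]
    · have hdvd' : ¬ d ∣ K - d := by
        intro h
        exact hdvd (by have := Nat.sub_add_cancel hK; rw [← this]; exact Nat.dvd_add h dvd_rfl)
      rw [if_neg hdvd, if_neg hdvd', sub_zero]
  · rw [if_neg hK, sub_zero]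
    by_cases hK0 : K = 0
    · subst hK0; simp
    · have : ¬ d ∣ K := fun h => hK (Nat.le_of_dvd (Nat.pos_of_ne_zero hK0) h)
      rw [if_neg this, if_neg hK0]

lemma key_sum (n d K : ℕ) (hn : 0 < n) (hd : Odd d) :
    (∑ a ∈ Finset.range (K + 1),
        (if n ∣ a then (-1 : ℂ) ^ (a / n) else 0) * (if d ∣ K - a then (1 : ℂ) else 0))
      ∈ ({-1, 0, 1} : Set ℂ) := by
  classical
  have hd0 : 0 < d := hd.pos
  have hterm : ∀ a ∈ Finset.range (K + 1),
      (if n ∣ a then (-1 : ℂ) ^ (a / n) else 0) * (if d ∣ K - a then (1 : ℂ) else 0)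
      = if (n ∣ a ∧ d ∣ K - a) then (-1 : ℂ) ^ (a / n) else 0 := by
    intro a _
    by_cases h1 : n ∣ a <;> by_cases h2 : d ∣ K - a <;> simp [h1, h2]
  rw [Finset.sum_congr rfl hterm, ← Finset.sum_filter]
  set I := (Finset.range (K + 1)).filter (fun a => n ∣ a ∧ d ∣ K - a) with hI
  rcases I.eq_empty_or_nonempty with h | h
  · rw [h, Finset.sum_empty]; right; left; rfl
  · set a₀ := I.min' h with ha₀
    have hmem := Finset.mem_filter.mp (I.min'_mem h)
    have hna : n ∣ a₀ := hmem.2.1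
    have hdK : d ∣ K - a₀ := hmem.2.2
    have ha₀K : a₀ ≤ K := by have := Finset.mem_range.mp hmem.1; omega
    set L := Nat.lcm n d with hLdef
    have hL : 0 < L := Nat.lcm_pos hn hd0
    have hnL : n ∣ L := Nat.dvd_lcm_left n d
    have hdL : d ∣ L := Nat.dvd_lcm_right n d
    obtain ⟨q, hq⟩ : ∃ q, q = (K - a₀) / L := ⟨_, rfl⟩
    have hIeq : I = (Finset.range (q + 1)).image (fun t => a₀ + t * L) := by
      ext a
      simp only [hI, Finset.mem_filter, Finset.mem_range, Finset.mem_image]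
      constructor
      · rintro ⟨haK, hna', hda'⟩
        have haK' : a ≤ K := by omega
        have h0a : a₀ ≤ a := I.min'_le a (by
          rw [hI, Finset.mem_filter]; exact ⟨Finset.mem_range.mpr haK, hna', hda'⟩)
        have hdiff : L ∣ a - a₀ := by
          apply Nat.lcm_dvd
          · exact Nat.dvd_sub hna' hna
          · have heq : (K - a₀) - (K - a) = a - a₀ := by omega
            rw [← heq]; exact Nat.dvd_sub hdK hda'
        obtain ⟨t, ht⟩ := hdiff
        have ha : a = a₀ + t * L := by rw [mul_comm, ← ht]; omega
        have h2 : t * L ≤ K - a₀ := by rw [mul_comm, ← ht]; omega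
        have h3 : t ≤ (K - a₀) / L := (Nat.le_div_iff_mul_le hL).mpr h2
        exact ⟨t, by omega, ha.symm⟩
      · rintro ⟨t, htT, rfl⟩
        have htle : t * L ≤ K - a₀ := by
          calc t * L ≤ ((K - a₀) / L) * L := Nat.mul_le_mul_right _ (by omega)
          _ ≤ K - a₀ := Nat.div_mul_le_self _ _
        refine ⟨by omega, dvd_add hna (hnL.mul_left t), ?_⟩
        rw [Nat.sub_add_eq]
        exact Nat.dvd_sub hdK (hdL.mul_left t)
    have hinj : ∀ x ∈ Finset.range (q + 1), ∀ y ∈ Finset.range (q + 1),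
        a₀ + x * L = a₀ + y * L → x = y := by
      intro x _ y _ hxy
      have : x * L = y * L := by omega
      exact Nat.eq_of_mul_eq_mul_right hL this
    rw [hIeq, Finset.sum_image hinj]
    obtain ⟨i₀, hi₀⟩ := hna
    obtain ⟨l, hl⟩ := hnL
    have hldvd : l ∣ d := by
      have h1 : L ∣ n * d := Nat.lcm_dvd (dvd_mul_right n d) (dvd_mul_left d n)
      rw [hl] at h1
      exact (mul_dvd_mul_iff_left hn.ne').mp h1
    have hlodd : Odd l := by
      rcases Nat.even_or_odd l with he | ho
      · exfalso
        obtain ⟨c, hc⟩ := hldvd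
        exact (Nat.not_odd_iff_even.mpr (hc ▸ he.mul_right c)) hd
      · exact ho
    have hcoeff : ∀ t, ((a₀ + t * L) / n : ℕ) = i₀ + t * l := by
      intro t
      have h5 : a₀ + t * L = n * (i₀ + t * l) := by rw [hi₀, hl]; ring
      rw [h5, Nat.mul_div_cancel_left _ hn]
    have hterm2 : ∀ t ∈ Finset.range (q + 1),
        (-1 : ℂ) ^ ((a₀ + t * L) / n) = (-1 : ℂ) ^ i₀ * (-1 : ℂ) ^ t := by
      intro t _
      rw [hcoeff t, pow_add, mul_comm t l, pow_mul, Odd.neg_one_pow hlodd]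
    rw [Finset.sum_congr rfl hterm2, ← Finset.mul_sum, neg_one_geom_sum]
    by_cases hT : Even (q + 1)
    · rw [if_pos hT, mul_zero]; right; left; rfl
    · rw [if_neg hT, mul_one]
      rcases Nat.even_or_odd i₀ with he | ho
      · right; right; rw [he.neg_one_pow]; rfl
      · left; rw [ho.neg_one_pow]

end CoeffsPmOneAux

/-- For all positive integers `m` and `n`, every coefficient of the formal power
series expansion in `q` of `a(m,n) = (−1)^{m−1} q^{2mn+m−1} / ((1+q^n)(1−q^{2m−1}))`
is `−1`, `0`, or `1`. -/
theorem coeffs_pm_one (m n : ℕ) (hm : 1 ≤ m) (hn : 1 ≤ n) (N : ℕ) :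
    PowerSeries.coeff (R := ℂ) N
      ((-1 : PowerSeries ℂ) ^ (m - 1) * (PowerSeries.X : PowerSeries ℂ) ^ (2 * m * n + m - 1)
        * (1 + (PowerSeries.X : PowerSeries ℂ) ^ n)⁻¹
        * (1 - (PowerSeries.X : PowerSeries ℂ) ^ (2 * m - 1))⁻¹)
      ∈ ({-1, 0, 1} : Set ℂ) := by
  classical
  set d := 2 * m - 1 with hd_def
  have hd0 : 0 < d := by omega
  have hdodd : Odd d := ⟨m - 1, by omega⟩
  set A := 2 * m * n + m - 1 with hA_def
  set f : ℕ → ℂ := fun k => if n ∣ k then (-1 : ℂ) ^ (k / n) else 0 with hf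
  set g : ℕ → ℂ := fun k => if d ∣ k then (1 : ℂ) else 0 with hg
  have hrw : ((-1 : PowerSeries ℂ) ^ (m - 1) * (PowerSeries.X : PowerSeries ℂ) ^ A
        * (1 + (PowerSeries.X : PowerSeries ℂ) ^ n)⁻¹
        * (1 - (PowerSeries.X : PowerSeries ℂ) ^ d)⁻¹)
      = PowerSeries.C (R := ℂ) ((-1 : ℂ) ^ (m - 1))
        * ((PowerSeries.mk f * PowerSeries.mk g) * (PowerSeries.X : PowerSeries ℂ) ^ A) := by
    rw [CoeffsPmOneAux.inv_one_add_pow n hn, CoeffsPmOneAux.inv_one_sub_pow d hd0]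
    have : ((-1 : PowerSeries ℂ)) ^ (m - 1) = PowerSeries.C (R := ℂ) ((-1 : ℂ) ^ (m - 1)) := by
      rw [map_pow, map_neg, map_one]
    rw [this]; ring
  rw [hrw, PowerSeries.coeff_C_mul, PowerSeries.coeff_mul_X_pow']
  have hmem : (if A ≤ N then
      (PowerSeries.coeff (R := ℂ) (N - A)) (PowerSeries.mk f * PowerSeries.mk g) else 0)
      ∈ ({-1, 0, 1} : Set ℂ) := by
    split_ifs with hAN
    · rw [PowerSeries.coeff_mul, Finset.Nat.sum_antidiagonal_eq_sum_range_succ_mk]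
      simp only [PowerSeries.coeff_mk, hf, hg]
      exact CoeffsPmOneAux.key_sum n d (N - A) hn hdodd
    · right; left; rfl
  rcases Nat.even_or_odd (m - 1) with he | ho
  · rw [he.neg_one_pow, one_mul]; exact hmem
  · rw [ho.neg_one_pow]
    rcases hmem with h | h | h
    · right; right; rw [h]; simp
    · right; left; rw [h]; simp
    · left; rw [h]; simp
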